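/- arXiv:1909.00380 — 3 statements merged into one kernel-verified Lean document; each statement's English description precedes it below -/
import Mathlib

section
/- Let G be a finite group, Z its center, and ψ : Z → ℂ× an injective character such that the induced pairing ⟨xZ, yZ⟩ := ψ([x,y]) on G/Z is well-defined and non-degenerate (G two-step nilpotent with [G,G] ⊆ Z). Then every complex irreducible representation of G with central character ψ has dimension equal to the square root of [G : Z], and any two such irreducible representations are isomorphic (Stone–von Neumann uniqueness). -/
open LinearMap Module Representation TensorProduct



private lemma stmt8_trace_linHom {G V W : Type*} [Group G]
    [AddCommGroup V] [Module ℂ V] [FiniteDimensional ℂ V]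
    [AddCommGroup W] [Module ℂ W] [FiniteDimensional ℂ W]
    (ρ : Representation ℂ G V) (ρ' : Representation ℂ G W) (g : G) :
    trace ℂ _ ((Representation.linHom ρ' ρ) g)
      = trace ℂ W (ρ' g⁻¹) * trace ℂ V (ρ g) := by
  have hc : (Representation.linHom ρ' ρ) g
      = (dualTensorHomEquiv ℂ W V).conj (TensorProduct.map (ρ'.dual g) (ρ g)) := by
    apply LinearMap.ext; intro f
    have h0 := LinearMap.congr_fun (Representation.dualTensorHom_comm ρ' ρ g)
      ((dualTensorHomEquiv ℂ W V).symm f)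
    simp only [LinearEquiv.conj_apply, coe_comp, Function.comp_apply, LinearEquiv.coe_coe] at h0 ⊢
    simpa [dualTensorHomEquiv] using h0.symm
  rw [hc, trace_conj', trace_tensorProduct', Representation.dual_apply, trace_transpose']


private lemma stmt8_vanish {G V : Type*} [Group G]
    [AddCommGroup V] [Module ℂ V] [FiniteDimensional ℂ V]
    (hcomm : ∀ x y : G, x * y * x⁻¹ * y⁻¹ ∈ Subgroup.center G)
    (ψ : Subgroup.center G →* ℂˣ)
    (ρ : Representation ℂ G V)
    (hcent : ∀ (z : Subgroup.center G) (v : V), ρ (z : G) v = (ψ z : ℂ) • v)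
    (x : G) (y : G) (hψc : ψ ⟨x * y * x⁻¹ * y⁻¹, hcomm x y⟩ ≠ 1) :
    trace ℂ V (ρ x) = 0 := by
  set c : Subgroup.center G := ⟨x * y * x⁻¹ * y⁻¹, hcomm x y⟩ with hc
  have hgrp : (c : G)⁻¹ * x = y * x * y⁻¹ := by
    simp only [hc]
    group
  have h1 : trace ℂ V (ρ (y * x * y⁻¹)) = trace ℂ V (ρ x) := by
    have e1 : ρ (y * x * y⁻¹) = ρ y * ρ (x * y⁻¹) := by
      rw [← map_mul]; congr 1; group
    have e2 : ρ (x * y⁻¹) * ρ y = ρ x := by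
      rw [← map_mul]; congr 1; group
    rw [e1, trace_mul_comm, e2]
  have h2 : ρ ((c : G)⁻¹ * x) = ((ψ c⁻¹ : ℂˣ) : ℂ) • ρ x := by
    ext v
    have : ρ ((c : G)⁻¹ * x) v = ρ ((c⁻¹ : Subgroup.center G) : G) (ρ x v) := by
      rw [map_mul]; rfl
    rw [this, hcent c⁻¹ (ρ x v)]
    rfl
  have h3 : trace ℂ V (ρ x) = ((ψ c⁻¹ : ℂˣ) : ℂ) * trace ℂ V (ρ x) := by
    conv_lhs => rw [← h1, ← hgrp, h2]
    rw [map_smul, smul_eq_mul]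
  have hu : ((ψ c : ℂˣ) : ℂ) ≠ 1 := fun h => hψc (Units.ext h)
  have hmul : ((ψ c : ℂˣ) : ℂ) * ((ψ c⁻¹ : ℂˣ) : ℂ) = 1 := by
    rw [← Units.val_mul, ← map_mul, mul_inv_cancel, map_one, Units.val_one]
  have h4 : ((ψ c : ℂˣ) : ℂ) * trace ℂ V (ρ x) = trace ℂ V (ρ x) := by
    conv_lhs => rw [h3]
    rw [← mul_assoc, hmul, one_mul]
  have h5 : (((ψ c : ℂˣ) : ℂ) - 1) * trace ℂ V (ρ x) = 0 := by
    rw [sub_mul, one_mul, h4, sub_self]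
  rcases mul_eq_zero.1 h5 with h | h
  · exact absurd (by linear_combination h) hu
  · exact h


private lemma stmt8_sum_eq_card {G V W : Type*} [Group G] [Fintype G]
    [AddCommGroup V] [Module ℂ V] [FiniteDimensional ℂ V]
    [AddCommGroup W] [Module ℂ W] [FiniteDimensional ℂ W]
    (ρ : Representation ℂ G V) (ρ' : Representation ℂ G W)
    (htr : ∀ g : G, trace ℂ _ ((Representation.linHom ρ' ρ) g)
      = trace ℂ W (ρ' g⁻¹) * trace ℂ V (ρ g)) :
    ∑ g : G, trace ℂ W (ρ' g⁻¹) * trace ℂ V (ρ g)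
      = (Fintype.card G : ℂ) * (finrank ℂ (Representation.linHom ρ' ρ).invariants : ℂ) := by
  have hc0 : (Fintype.card G : ℂ) ≠ 0 := by exact_mod_cast (Fintype.card_ne_zero (α := G))
  haveI : Invertible (Fintype.card G : ℂ) := invertibleOfNonzero hc0
  have h := ((Representation.linHom ρ' ρ).isProj_averageMap).trace
  rw [Representation.averageMap, GroupAlgebra.average, map_smul, map_sum, map_smul, map_sum] at h
  simp only [MonoidAlgebra.of_apply, Representation.asAlgebraHom_single, one_smul, htr] at h
  rw [invOf_eq_inv _, smul_eq_mul, inv_mul_eq_iff_eq_mul₀ hc0] at h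
  exact h


private lemma stmt8_key {G V W : Type*} [Group G] [Fintype G]
    [AddCommGroup V] [Module ℂ V] [FiniteDimensional ℂ V]
    [AddCommGroup W] [Module ℂ W] [FiniteDimensional ℂ W]
    (hcomm : ∀ x y : G, x * y * x⁻¹ * y⁻¹ ∈ Subgroup.center G)
    (ψ : Subgroup.center G →* ℂˣ)
    (ρ : Representation ℂ G V) (ρ' : Representation ℂ G W)
    (hcent : ∀ (z : Subgroup.center G) (v : V), ρ (z : G) v = (ψ z : ℂ) • v)
    (hcent' : ∀ (z : Subgroup.center G) (w : W), ρ' (z : G) w = (ψ z : ℂ) • w)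
    (hvanish : ∀ x : G, x ∉ Subgroup.center G → trace ℂ V (ρ x) = 0)
    (hsum : ∑ g : G, trace ℂ W (ρ' g⁻¹) * trace ℂ V (ρ g)
      = (Fintype.card G : ℂ) * (finrank ℂ (Representation.linHom ρ' ρ).invariants : ℂ)) :
    finrank ℂ W * finrank ℂ V
      = (Subgroup.center G).index * finrank ℂ (Representation.linHom ρ' ρ).invariants := by
  classical
  set d := finrank ℂ V
  set d' := finrank ℂ W
  set n := finrank ℂ (Representation.linHom ρ' ρ).invariants
  -- compute the sum over the center
  have hterm : ∀ g : G, trace ℂ W (ρ' g⁻¹) * trace ℂ V (ρ g)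
      = if g ∈ Subgroup.center G then ((d' * d : ℕ) : ℂ) else 0 := by
    intro g
    by_cases hg : g ∈ Subgroup.center G
    · rw [if_pos hg]
      set z : Subgroup.center G := ⟨g, hg⟩
      have e1 : ρ g = ((ψ z : ℂˣ) : ℂ) • (LinearMap.id : V →ₗ[ℂ] V) := by
        ext v; exact hcent z v
      have e2 : ρ' g⁻¹ = ((ψ z⁻¹ : ℂˣ) : ℂ) • (LinearMap.id : W →ₗ[ℂ] W) := by
        ext w; exact hcent' z⁻¹ w
      have hmul : ((ψ z⁻¹ : ℂˣ) : ℂ) * ((ψ z : ℂˣ) : ℂ) = 1 := by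
        rw [← Units.val_mul, ← map_mul, inv_mul_cancel, map_one, Units.val_one]
      rw [e1, e2, map_smul, map_smul, smul_eq_mul, smul_eq_mul, trace_id, trace_id]
      push_cast
      calc ((ψ z⁻¹ : ℂˣ) : ℂ) * (d' : ℂ) * (((ψ z : ℂˣ) : ℂ) * (d : ℂ))
          = (((ψ z⁻¹ : ℂˣ) : ℂ) * ((ψ z : ℂˣ) : ℂ)) * ((d' : ℂ) * (d : ℂ)) := by ring
        _ = (d' : ℂ) * (d : ℂ) := by rw [hmul, one_mul]
    · rw [if_neg hg, hvanish g hg, mul_zero]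
  rw [Finset.sum_congr rfl (fun g _ => hterm g), ← Finset.sum_filter,
    Finset.sum_const] at hsum
  -- card of the filter is the card of the center
  have hcard : (Finset.univ.filter (· ∈ Subgroup.center G)).card
      = Nat.card (Subgroup.center G) := by
    rw [Nat.card_eq_fintype_card, Fintype.card_subtype]
  rw [hcard, nsmul_eq_mul] at hsum
  have hGcard : (Fintype.card G : ℂ)
      = ((Nat.card (Subgroup.center G) * (Subgroup.center G).index : ℕ) : ℂ) := by
    rw [Subgroup.card_mul_index, Nat.card_eq_fintype_card]
  rw [hGcard] at hsum
  have hcast : ((Nat.card (Subgroup.center G) * (d' * d) : ℕ) : ℂ)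
      = ((Nat.card (Subgroup.center G) * ((Subgroup.center G).index * n) : ℕ) : ℂ) := by
    push_cast
    push_cast at hsum
    linear_combination hsum
  exact Nat.eq_of_mul_eq_mul_left Nat.card_pos (Nat.cast_inj.mp hcast)


private lemma stmt8_schur_one {G V : Type*} [Group G]
    [AddCommGroup V] [Module ℂ V] [FiniteDimensional ℂ V] [Nontrivial V]
    (ρ : Representation ℂ G V)
    (hirr : ∀ U : Submodule ℂ V, (∀ g : G, ∀ v ∈ U, ρ g v ∈ U) → U = ⊥ ∨ U = ⊤) :
    finrank ℂ (Representation.linHom ρ ρ).invariants = 1 := by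
  have hinvv : ∀ (g : G) (v : V), ρ g⁻¹ (ρ g v) = v := by
    intro g v
    have : (ρ g⁻¹ * ρ g) v = v := by rw [← map_mul, inv_mul_cancel, map_one]; rfl
    simpa using this
  have hinvv2 : ∀ (g : G) (v : V), ρ g (ρ g⁻¹ v) = v := by
    intro g v
    simpa using hinvv g⁻¹ v
  have hspan : (Representation.linHom ρ ρ).invariants
      = (ℂ ∙ (LinearMap.id : V →ₗ[ℂ] V)) := by
    apply le_antisymm
    · intro f hf
      rw [Representation.mem_invariants] at hf
      have hfc : ∀ (g : G) (v : V), f (ρ g v) = ρ g (f v) := by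
        intro g v
        have h0 := congrArg (fun (h : V →ₗ[ℂ] V) => h (ρ g v)) (hf g)
        simp only [Representation.linHom_apply, coe_comp, Function.comp_apply, hinvv] at h0
        exact h0.symm
      obtain ⟨c, hc⟩ := Module.End.exists_eigenvalue (f : Module.End ℂ V)
      obtain ⟨v₀, hv₀⟩ := hc.exists_hasEigenvector
      set K := LinearMap.ker (f - c • (LinearMap.id : V →ₗ[ℂ] V)) with hK
      have hKinv : ∀ g : G, ∀ u ∈ K, ρ g u ∈ K := by
        intro g u hu
        rw [hK, LinearMap.mem_ker, LinearMap.sub_apply, LinearMap.smul_apply, LinearMap.id_apply] at hu ⊢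
        rw [hfc g u, ← map_smul, ← map_sub, hu, map_zero]
      have hv₀K : v₀ ∈ K := by
        rw [hK, LinearMap.mem_ker, LinearMap.sub_apply, LinearMap.smul_apply, LinearMap.id_apply, hv₀.apply_eq_smul, sub_self]
      rcases hirr K hKinv with hbot | htop
      · exact absurd (hbot ▸ hv₀K) (by simpa using hv₀.2)
      · refine Submodule.mem_span_singleton.mpr ⟨c, ?_⟩
        ext v
        have hv : v ∈ K := htop ▸ Submodule.mem_top
        rw [hK, LinearMap.mem_ker, LinearMap.sub_apply, LinearMap.smul_apply, LinearMap.id_apply, sub_eq_zero] at hv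
        simpa using hv.symm
    · rw [Submodule.span_le, Set.singleton_subset_iff]
      rw [SetLike.mem_coe, Representation.mem_invariants]
      intro g
      ext v
      simp [Representation.linHom_apply, hinvv2]
  have hid0 : (LinearMap.id : V →ₗ[ℂ] V) ≠ 0 := by
    intro h
    obtain ⟨x, hx⟩ := exists_ne (0 : V)
    exact hx (by rw [← LinearMap.id_apply (R := ℂ) x, h, LinearMap.zero_apply])
  rw [hspan, finrank_span_singleton hid0]


/-- Stone–von Neumann: Let `G` be a finite two-step nilpotent group with
center `Z` and `ψ : Z → ℂˣ` an injective (generic) character.  Every complex irreducible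
representation of `G` with central character `ψ` has dimension the square root of
`[G : Z]`, and any two such representations are isomorphic. -/
theorem stmt8 {G : Type*} [Group G] [Fintype G]
    (hcomm : ∀ x y : G, x * y * x⁻¹ * y⁻¹ ∈ Subgroup.center G)
    (ψ : Subgroup.center G →* ℂˣ) (hinj : Function.Injective ψ)
    (hgen : ∀ x : G, (∀ y : G, ψ ⟨x * y * x⁻¹ * y⁻¹, hcomm x y⟩ = 1) →
      x ∈ Subgroup.center G)
    {V W : Type*} [AddCommGroup V] [Module ℂ V] [FiniteDimensional ℂ V] [Nontrivial V]
    [AddCommGroup W] [Module ℂ W] [FiniteDimensional ℂ W] [Nontrivial W]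
    (ρ : Representation ℂ G V) (ρ' : Representation ℂ G W)
    (hirr : ∀ U : Submodule ℂ V, (∀ g : G, ∀ v ∈ U, ρ g v ∈ U) → U = ⊥ ∨ U = ⊤)
    (hirr' : ∀ U : Submodule ℂ W, (∀ g : G, ∀ w ∈ U, ρ' g w ∈ U) → U = ⊥ ∨ U = ⊤)
    (hcent : ∀ (z : Subgroup.center G) (v : V), ρ (z : G) v = (ψ z : ℂ) • v)
    (hcent' : ∀ (z : Subgroup.center G) (w : W), ρ' (z : G) w = (ψ z : ℂ) • w) :
    (Module.finrank ℂ V) ^ 2 = (Subgroup.center G).index ∧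
    ∃ e : V ≃ₗ[ℂ] W, ∀ (g : G) (v : V), e (ρ g v) = ρ' g (e v) := by
  -- characters vanish off the center
  have hvanish : ∀ x : G, x ∉ Subgroup.center G → trace ℂ V (ρ x) = 0 := by
    intro x hx
    have hny : ¬ ∀ y : G, ψ ⟨x * y * x⁻¹ * y⁻¹, hcomm x y⟩ = 1 := fun h => hx (hgen x h)
    push_neg at hny
    obtain ⟨y, hy⟩ := hny
    exact stmt8_vanish hcomm ψ ρ hcent x y hy
  have hvanish' : ∀ x : G, x ∉ Subgroup.center G → trace ℂ W (ρ' x) = 0 := by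
    intro x hx
    have hny : ¬ ∀ y : G, ψ ⟨x * y * x⁻¹ * y⁻¹, hcomm x y⟩ = 1 := fun h => hx (hgen x h)
    push_neg at hny
    obtain ⟨y, hy⟩ := hny
    exact stmt8_vanish hcomm ψ ρ' hcent' x y hy
  set d := finrank ℂ V with hd
  set d' := finrank ℂ W with hd'
  -- dimension equations
  have hdd : d * d = (Subgroup.center G).index := by
    have h := stmt8_key hcomm ψ ρ ρ hcent hcent hvanish
      (stmt8_sum_eq_card ρ ρ (stmt8_trace_linHom ρ ρ))
    rwa [stmt8_schur_one ρ hirr, mul_one] at h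
  have hdd' : d' * d' = (Subgroup.center G).index := by
    have h := stmt8_key hcomm ψ ρ' ρ' hcent' hcent' hvanish'
      (stmt8_sum_eq_card ρ' ρ' (stmt8_trace_linHom ρ' ρ'))
    rwa [stmt8_schur_one ρ' hirr', mul_one] at h
  have hde : d' = d := Nat.mul_self_inj.mp (hdd'.trans hdd.symm)
  have hdpos : 0 < d := hd ▸ finrank_pos
  refine ⟨by rw [pow_two]; exact hdd, ?_⟩
  -- the cross equation
  set n := finrank ℂ (Representation.linHom ρ' ρ).invariants with hn
  have hcross : d' * d = (Subgroup.center G).index * n :=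
    stmt8_key hcomm ψ ρ ρ' hcent hcent' hvanish
      (stmt8_sum_eq_card ρ ρ' (stmt8_trace_linHom ρ ρ'))
  rw [hde, hdd] at hcross
  have hn1 : n = 1 := by
    have hip : 0 < (Subgroup.center G).index := hdd ▸ Nat.mul_pos hdpos hdpos
    have := Nat.eq_of_mul_eq_mul_left hip
      (show (Subgroup.center G).index * 1 = (Subgroup.center G).index * n by
        rw [mul_one]; exact hcross)
    omega
  -- obtain a nonzero equivariant map
  have hnebot : (Representation.linHom ρ' ρ).invariants ≠ ⊥ := by
    intro hbot
    rw [hn, hbot, finrank_bot] at hn1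
    omega
  obtain ⟨f, hfmem, hf0⟩ := Submodule.exists_mem_ne_zero_of_ne_bot hnebot
  rw [Representation.mem_invariants] at hfmem
  have hinvv' : ∀ (g : G) (w : W), ρ' g⁻¹ (ρ' g w) = w := by
    intro g w
    have : (ρ' g⁻¹ * ρ' g) w = w := by rw [← map_mul, inv_mul_cancel, map_one]; rfl
    simpa using this
  have hfe : ∀ (g : G) (w : W), f (ρ' g w) = ρ g (f w) := by
    intro g w
    have h0 := congrArg (fun (h : W →ₗ[ℂ] V) => h (ρ' g w)) (hfmem g)
    simp only [Representation.linHom_apply, coe_comp, Function.comp_apply, hinvv'] at h0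
    exact h0.symm
  -- Schur: f is bijective
  have hker : LinearMap.ker f = ⊥ := by
    rcases hirr' (LinearMap.ker f) (fun g w hw => by
      rw [LinearMap.mem_ker] at hw ⊢
      rw [hfe g w, hw, map_zero]) with h | h
    · exact h
    · exact absurd (LinearMap.ker_eq_top.mp h) hf0
  have hrange : LinearMap.range f = ⊤ := by
    rcases hirr (LinearMap.range f) (fun g v hv => by
      obtain ⟨w, rfl⟩ := hv
      exact ⟨ρ' g w, hfe g w⟩) with h | h
    · exact absurd (LinearMap.range_eq_bot.mp h) hf0
    · exact h
  have hbij : Function.Bijective f := ⟨LinearMap.ker_eq_bot.mp hker, LinearMap.range_eq_top.mp hrange⟩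
  set E := LinearEquiv.ofBijective f hbij with hE
  refine ⟨E.symm, fun g v => ?_⟩
  apply E.injective
  rw [E.apply_symm_apply]
  have h1 : E (ρ' g (E.symm v)) = f (ρ' g (E.symm v)) := rfl
  rw [h1, hfe g (E.symm v)]
  congr 1
  exact (E.apply_symm_apply v).symm
end

section
/- Let G be a finite two-step nilpotent group with center Z, and ψ : Z → ℂ× a generic character (for every x ∉ Z there exists y with ψ([x,y]) ≠ 1). Then the index [G : Z] is a perfect square. -/
universe u

private lemma skew_aux {A : Type u} [CommGroup A] (B : A →* A →* ℂˣ)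
    (halt : ∀ a, B a a = 1) (a b : A) : B b a = (B a b)⁻¹ := by
  have h := halt (a * b)
  simp only [map_mul, MonoidHom.mul_apply, halt, one_mul, mul_one] at h
  rw [eq_inv_iff_mul_eq_one, mul_comm]
  rwa [mul_comm] at h

private lemma key : ∀ (N : ℕ), ∀ {A : Type u} [CommGroup A] [Finite A]
    (B : A →* A →* ℂˣ), (∀ a, B a a = 1) → (∀ a, (∀ b, B a b = 1) → a = 1) →
    Nat.card A = N → ∃ m : ℕ, N = m ^ 2 := by
  intro N
  induction N using Nat.strong_induction_on with
  | _ N ih =>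
  intro A _ _ B halt hnd hcard
  by_cases htriv : ∀ a : A, a = 1
  · refine ⟨1, ?_⟩
    have : Subsingleton A := ⟨fun a b => (htriv a).trans (htriv b).symm⟩
    rw [← hcard, one_pow, Nat.card_eq_one_iff_unique]
    exact ⟨this, ⟨1⟩⟩
  · push_neg at htriv
    obtain ⟨a0, ha0⟩ := htriv
    have : Nontrivial A := ⟨a0, 1, ha0⟩
    set n := Monoid.exponent A with hn_def
    have hn1 : 1 < n := Monoid.one_lt_exponent
    have hexp : ∀ a : A, a ^ n = 1 := fun a => Monoid.pow_exponent_eq_one a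
    -- injectivity of B
    have Binj : Function.Injective B := by
      rw [injective_iff_map_eq_one]
      intro a ha
      exact hnd a (fun b => by rw [ha]; rfl)
    obtain ⟨x, hx⟩ := Monoid.exists_orderOf_eq_exponent
      (Monoid.ExponentExists.of_finite (G := A))
    have hordBx : orderOf (B x) = n := by rw [orderOf_injective B Binj, hx]
    -- find y with B x y of order n
    haveI : Finite (B x).range := Set.Finite.to_subtype (Set.finite_range (B x))
    obtain ⟨g, hg⟩ := IsCyclic.exists_generator (α := (B x).range)
    obtain ⟨y, hy⟩ := g.2
    set ζ : ℂˣ := B x y with hζ_def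
    have hgval : (g : ℂˣ) = ζ := hy.symm
    have hζord : orderOf ζ = n := by
      have hdvd1 : orderOf ζ ∣ n := by
        apply orderOf_dvd_of_pow_eq_one
        rw [hζ_def, ← map_pow, hexp y, map_one]
      have hdvd2 : n ∣ orderOf ζ := by
        rw [← hordBx]
        apply orderOf_dvd_of_pow_eq_one
        ext b
        have hbmem : B x b ∈ (B x).range := ⟨b, rfl⟩
        obtain ⟨m, hm⟩ := hg ⟨B x b, hbmem⟩
        have hm' : (g : ℂˣ) ^ m = B x b := by
          have := congrArg (Subtype.val) hm
          simpa using this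
        rw [MonoidHom.pow_apply, MonoidHom.one_apply, ← hm', hgval,
          ← zpow_natCast, ← zpow_mul, mul_comm, zpow_mul, zpow_natCast,
          pow_orderOf_eq_one, one_zpow]
      exact Nat.dvd_antisymm hdvd1 hdvd2
    haveI : NeZero n := ⟨by omega⟩
    -- all n-th roots of unity are powers of ζ
    have hroot : ∀ c : ℂˣ, c ^ n = 1 → ∃ i : ℤ, c = ζ ^ i := by
      intro c hc
      have hζmem : ζ ∈ rootsOfUnity n ℂ := (mem_rootsOfUnity n ζ).mpr
        (by rw [← hζord]; exact pow_orderOf_eq_one ζ)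
      have hcmem : c ∈ rootsOfUnity n ℂ := (mem_rootsOfUnity n c).mpr hc
      set ζ' : rootsOfUnity n ℂ := ⟨ζ, hζmem⟩ with hζ'
      have hζ'ord : orderOf ζ' = n :=
        (Subgroup.orderOf_coe ζ').symm.trans hζord
      have htop : Subgroup.zpowers ζ' = ⊤ := by
        apply Subgroup.eq_top_of_card_eq
        rw [Nat.card_zpowers, hζ'ord,
          Complex.card_rootsOfUnity]
      have : (⟨c, hcmem⟩ : rootsOfUnity n ℂ) ∈ Subgroup.zpowers ζ' := by
        rw [htop]; trivial
      obtain ⟨i, hi⟩ := this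
      refine ⟨i, ?_⟩
      have := congrArg Subtype.val hi
      simpa [hζ'] using this.symm
    have hskew : ∀ a b : A, B b a = (B a b)⁻¹ := skew_aux B halt
    -- order of x and decomposition
    have hordx : orderOf x = n := hx
    -- the perpendicular subgroup
    set K : Subgroup A := (B.flip x).ker ⊓ (B.flip y).ker with hK_def
    have memK : ∀ t : A, t ∈ K ↔ B t x = 1 ∧ B t y = 1 := by
      intro t
      simp [hK_def, Subgroup.mem_inf, MonoidHom.mem_ker, MonoidHom.flip_apply]
    -- decomposition
    have hBval : ∀ (i k : ℤ), B (x ^ i * y ^ k) x = ζ ^ (-k) ∧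
        B (x ^ i * y ^ k) y = ζ ^ i := by
      intro i k
      have ev : ∀ (a : A) (j : ℤ) (b : A), B (a ^ j) b = (B a b) ^ j := by
        intro a j b
        induction j using Int.rec with
        | ofNat m => simp [zpow_natCast, map_pow, MonoidHom.pow_apply]
        | negSucc m => simp [zpow_negSucc, map_pow, MonoidHom.pow_apply]
      constructor
      · rw [map_mul, MonoidHom.mul_apply, ev, ev, halt, hskew x y,
          one_zpow, one_mul, ← hζ_def, inv_zpow, ← zpow_neg]
      · rw [map_mul, MonoidHom.mul_apply, ev, ev, halt, ← hζ_def,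
          one_zpow, mul_one]
    have hpow1 : ∀ (a b : A), (B a b) ^ n = 1 := by
      intro a b
      rw [← MonoidHom.pow_apply, ← map_pow, hexp a, map_one, MonoidHom.one_apply]
    have hdecomp : ∀ a : A, ∃ (i k : ℤ) (t : A), t ∈ K ∧ a = x ^ i * y ^ k * t := by
      intro a
      obtain ⟨i, hi⟩ := hroot (B a y) (hpow1 a y)
      obtain ⟨k, hk⟩ := hroot (B a x) (hpow1 a x)
      refine ⟨i, -k, (x ^ i * y ^ (-k))⁻¹ * a, ?_, by group⟩
      rw [memK, map_mul, map_inv, MonoidHom.mul_apply, MonoidHom.mul_apply,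
        MonoidHom.inv_apply, MonoidHom.inv_apply]
      obtain ⟨h1, h2⟩ := hBval i (-k)
      rw [h1, h2, hi, hk, neg_neg]
      constructor <;> group
    -- the bijection
    let e : ZMod n × ZMod n × K → A := fun p =>
      x ^ (p.1.val) * y ^ (p.2.1.val) * (p.2.2 : A)
    have hBy : ∀ (p q : ℕ) (t : A), t ∈ K → B (x ^ p * y ^ q * t) y = ζ ^ p := by
      intro p q t ht
      rw [map_mul, map_mul, MonoidHom.mul_apply, MonoidHom.mul_apply,
        map_pow, map_pow, MonoidHom.pow_apply, MonoidHom.pow_apply,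
        halt, ((memK t).mp ht).2, ← hζ_def, one_pow, mul_one, mul_one]
    have hBx : ∀ (p q : ℕ) (t : A), t ∈ K → B (x ^ p * y ^ q * t) x = ζ⁻¹ ^ q := by
      intro p q t ht
      rw [map_mul, map_mul, MonoidHom.mul_apply, MonoidHom.mul_apply,
        map_pow, map_pow, MonoidHom.pow_apply, MonoidHom.pow_apply,
        halt, ((memK t).mp ht).1, hskew x y, ← hζ_def, one_pow, one_mul, mul_one]
    have hval_eq : ∀ (c : ℂˣ), orderOf c = n → ∀ (p q : ZMod n),
        c ^ p.val = c ^ q.val → p = q := by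
      intro c hc p q h
      rw [pow_eq_pow_iff_modEq, hc] at h
      rw [Nat.ModEq, Nat.mod_eq_of_lt (ZMod.val_lt p),
        Nat.mod_eq_of_lt (ZMod.val_lt q)] at h
      exact ZMod.val_injective n h
    have hbij : Function.Bijective e := by
      constructor
      · rintro ⟨p, q, t⟩ ⟨p', q', t'⟩ h
        simp only [e] at h
        have h1 : ζ ^ p.val = ζ ^ p'.val := by
          rw [← hBy p.val q.val t t.2, ← hBy p'.val q'.val t' t'.2, h]
        have h2 : ζ⁻¹ ^ q.val = ζ⁻¹ ^ q'.val := by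
          rw [← hBx p.val q.val t t.2, ← hBx p'.val q'.val t' t'.2, h]
        have hp : p = p' := hval_eq ζ hζord p p' h1
        have hq : q = q' := hval_eq ζ⁻¹ (by rwa [orderOf_inv]) q q' h2
        subst hp; subst hq
        have : (t : A) = (t' : A) := by
          exact mul_left_cancel h
        exact Prod.ext rfl (Prod.ext rfl (Subtype.ext this))
      · intro a
        obtain ⟨i, k, t, ht, rfl⟩ := hdecomp a
        refine ⟨⟨(i : ZMod n), (k : ZMod n), ⟨t, ht⟩⟩, ?_⟩
        simp only [e]
        congr 2
        · rw [← zpow_natCast, ← zpow_mod_orderOf x i, hordx,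
            ZMod.val_intCast]
        · have hordy : orderOf y = n := by
            have h1 : n ∣ orderOf y := by
              rw [← hζord]
              apply orderOf_dvd_of_pow_eq_one
              rw [hζ_def, ← map_pow, pow_orderOf_eq_one, map_one]
            exact Nat.dvd_antisymm (Monoid.order_dvd_exponent y) h1
          rw [← zpow_natCast, ← zpow_mod_orderOf y k, hordy, ZMod.val_intCast]
    -- restricted pairing on K
    haveI : Finite K := inferInstance
    let B' : K →* K →* ℂˣ :=
      { toFun := fun t => (B (t : A)).comp K.subtype
        map_one' := by ext u; simp
        map_mul' := by intro t u; ext v; simp }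
    have halt' : ∀ t : K, B' t t = 1 := fun t => halt (t : A)
    have hnd' : ∀ t : K, (∀ u : K, B' t u = 1) → t = 1 := by
      intro t ht
      have htK := (memK (t : A)).mp t.2
      have hall : ∀ a : A, B (t : A) a = 1 := by
        intro a
        obtain ⟨i, k, u, hu, rfl⟩ := hdecomp a
        have h1 : B (t : A) (x ^ i) = 1 := by
          rw [map_zpow, htK.1, one_zpow]
        have h2 : B (t : A) (y ^ k) = 1 := by
          rw [map_zpow, htK.2, one_zpow]
        have h3 : B (t : A) u = 1 := ht ⟨u, hu⟩
        rw [map_mul, map_mul, h1, h2, h3, mul_one, mul_one]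
      exact Subtype.ext (hnd (t : A) hall)
    -- counting
    have hcards : N = n * (n * Nat.card K) := by
      rw [← hcard, ← Nat.card_eq_of_bijective e hbij, Nat.card_prod,
        Nat.card_prod, Nat.card_zmod]
    have hKpos : 0 < Nat.card K := Nat.card_pos
    have hKlt : Nat.card K < N := by
      have h2 : 2 * (2 * Nat.card K) ≤ n * (n * Nat.card K) :=
        Nat.mul_le_mul hn1 (Nat.mul_le_mul hn1 le_rfl)
      omega
    obtain ⟨m, hm⟩ := ih (Nat.card K) hKlt B' halt' hnd' rfl
    exact ⟨n * m, by rw [hcards, hm]; ring⟩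

/-- If `G` is a finite two-step nilpotent group with center `Z` admitting a
generic character `ψ : Z → ℂˣ` (for every `x ∉ Z` there is `y` with `ψ([x,y]) ≠ 1`),
then the index `[G : Z]` is a perfect square. -/
theorem stmt9 {G : Type*} [Group G] [Fintype G]
    (hcomm : ∀ x y : G, x * y * x⁻¹ * y⁻¹ ∈ Subgroup.center G)
    (ψ : Subgroup.center G →* ℂˣ)
    (hgen : ∀ x : G, (∀ y : G, ψ ⟨x * y * x⁻¹ * y⁻¹, hcomm x y⟩ = 1) →
      x ∈ Subgroup.center G) :
    ∃ m : ℕ, (Subgroup.center G).index = m ^ 2 := by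
  letI : CommGroup (G ⧸ Subgroup.center G) :=
    { (inferInstance : Group (G ⧸ Subgroup.center G)) with
      mul_comm := by
        intro a b
        induction a using QuotientGroup.induction_on with | H xa =>
        induction b using QuotientGroup.induction_on with | H xb =>
        rw [← QuotientGroup.mk_mul, ← QuotientGroup.mk_mul, QuotientGroup.eq]
        simpa [mul_assoc] using hcomm xb⁻¹ xa⁻¹ }
  haveI : Finite (G ⧸ Subgroup.center G) := Quotient.finite _
  -- the bare pairing
  let f : G → G → ℂˣ := fun x y => ψ ⟨x * y * x⁻¹ * y⁻¹, hcomm x y⟩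
  have hfa : ∀ x y : G, f x y = ψ ⟨x * y * x⁻¹ * y⁻¹, hcomm x y⟩ :=
    fun _ _ => rfl
  have hf_mul_right : ∀ x y z : G, f x (y * z) = f x y * f x z := by
    intro x y z
    rw [hfa, hfa, hfa, ← map_mul]
    congr 1
    apply Subtype.ext
    show x * (y * z) * x⁻¹ * (y * z)⁻¹ = x * y * x⁻¹ * y⁻¹ * (x * z * x⁻¹ * z⁻¹)
    have hc := Subgroup.mem_center_iff.mp (hcomm x z)
    rw [show x * (y * z) * x⁻¹ * (y * z)⁻¹ =
      x * y * x⁻¹ * y⁻¹ * (y * (x * z * x⁻¹ * z⁻¹) * y⁻¹) from by group, hc y]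
    group
  have hf_mul_left : ∀ x x' y : G, f (x * x') y = f x y * f x' y := by
    intro x x' y
    rw [hfa, hfa, hfa, ← map_mul]
    congr 1
    apply Subtype.ext
    show x * x' * y * (x * x')⁻¹ * y⁻¹ =
      x * y * x⁻¹ * y⁻¹ * (x' * y * x'⁻¹ * y⁻¹)
    have hc := Subgroup.mem_center_iff.mp (hcomm x' y)
    rw [show x * x' * y * (x * x')⁻¹ * y⁻¹ =
      x * (x' * y * x'⁻¹ * y⁻¹) * x⁻¹ * (x * y * x⁻¹ * y⁻¹) from by group, hc x,
      mul_inv_cancel_right]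
    exact (hc _).symm
  have hf_center_right : ∀ x y : G, y ∈ Subgroup.center G → f x y = 1 := by
    intro x y hy
    have h1 : (⟨x * y * x⁻¹ * y⁻¹, hcomm x y⟩ : Subgroup.center G) = 1 := by
      apply Subtype.ext
      show x * y * x⁻¹ * y⁻¹ = 1
      have hc := Subgroup.mem_center_iff.mp hy x
      rw [hc]; group
    rw [hfa, h1, map_one]
  have hf_center_left : ∀ x y : G, x ∈ Subgroup.center G → f x y = 1 := by
    intro x y hx
    have h1 : (⟨x * y * x⁻¹ * y⁻¹, hcomm x y⟩ : Subgroup.center G) = 1 := by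
      apply Subtype.ext
      show x * y * x⁻¹ * y⁻¹ = 1
      have hc := Subgroup.mem_center_iff.mp hx y
      rw [← hc]; group
    rw [hfa, h1, map_one]
  -- inner homs
  let fhom : G → G →* ℂˣ := fun x =>
    { toFun := f x
      map_one' := hf_center_right x 1 (one_mem _)
      map_mul' := hf_mul_right x }
  let fbar : G → (G ⧸ Subgroup.center G) →* ℂˣ := fun x =>
    QuotientGroup.lift (Subgroup.center G) (fhom x)
      (fun y hy => hf_center_right x y hy)
  have hfbar : ∀ (x y : G), fbar x (QuotientGroup.mk y) = f x y := fun _ _ => rfl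
  -- outer hom
  let F : G →* ((G ⧸ Subgroup.center G) →* ℂˣ) :=
    { toFun := fbar
      map_one' := by
        ext b
        exact congrArg Units.val (hf_center_left 1 b (one_mem _))
      map_mul' := by
        intro x x'
        ext b
        exact congrArg Units.val (hf_mul_left x x' b) }
  let B : (G ⧸ Subgroup.center G) →* ((G ⧸ Subgroup.center G) →* ℂˣ) :=
    QuotientGroup.lift (Subgroup.center G) F (by
      intro x hx
      ext b
      exact congrArg Units.val (hf_center_left x b hx))
  have hB : ∀ (x y : G),
      B (QuotientGroup.mk x) (QuotientGroup.mk y) = f x y := fun _ _ => rfl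
  have halt : ∀ a : G ⧸ Subgroup.center G, B a a = 1 := by
    intro a
    induction a using QuotientGroup.induction_on with | H xa =>
    rw [hB, hfa]
    have h1 : (⟨xa * xa * xa⁻¹ * xa⁻¹, hcomm xa xa⟩ : Subgroup.center G) = 1 := by
      apply Subtype.ext; show xa * xa * xa⁻¹ * xa⁻¹ = 1; group
    rw [h1, map_one]
  have hnd : ∀ a : G ⧸ Subgroup.center G, (∀ b, B a b = 1) → a = 1 := by
    intro a ha
    induction a using QuotientGroup.induction_on with | H xa =>
    rw [QuotientGroup.eq_one_iff]
    apply hgen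
    intro y
    have := ha (QuotientGroup.mk y)
    rwa [hB, hfa] at this
  obtain ⟨m, hm⟩ := key (Nat.card (G ⧸ Subgroup.center G)) B halt hnd rfl
  exact ⟨m, hm ▸ rfl⟩
end

section
/- Let q = p^m and consider the affine surface E = {(x,y,z) ∈ 𝔸³ over an algebraically closed field k of characteristic p : x^q · y = z^p - z}. Then the divisor of the regular function z on E equals X0 + q·Y0, where X0 = {y = 0, z = 0} and Y0 = {x = 0, z = 0} are the two irreducible (reduced) curves in the zero locus of z; i.e. the zero scheme of z on E has irreducible components X0 with multiplicity 1 and Y0 with multiplicity q. -/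
open MvPolynomial

section Helpers

variable {R : Type*} [CommRing R]

lemma span_pow_covBy [IsDomain R] {t : R} (ht0 : t ≠ 0)
    (ht : (Ideal.span {t}).IsMaximal) (j : ℕ) :
    (Ideal.span {t ^ (j + 1)}) ⋖ (Ideal.span {t ^ j} : Ideal R) := by
  set φ : R →ₗ[R] R := LinearMap.toSpanSingleton R R (t ^ j) with hφ
  have happ : ∀ r, φ r = r * t ^ j := fun r => by
    simp [hφ, LinearMap.toSpanSingleton_apply, smul_eq_mul]
  have hrange : LinearMap.range φ = Ideal.span {t ^ j} := by
    rw [← LinearMap.span_singleton_eq_range]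
  have hmapt : Submodule.map φ (Ideal.span {t}) = Ideal.span {t ^ (j + 1)} := by
    rw [Ideal.span, Submodule.map_span, Set.image_singleton, happ t, ← pow_succ']
  have htne : ¬ IsUnit t := fun h => ht.ne_top (Ideal.span_singleton_eq_top.mpr h)
  constructor
  · refine lt_of_le_of_ne (Ideal.span_singleton_le_span_singleton.mpr
      (pow_dvd_pow t (Nat.le_succ j))) ?_
    intro e
    obtain ⟨c, hc⟩ := Ideal.span_singleton_le_span_singleton.mp e.ge
    apply htne
    have : t ^ j * 1 = t ^ j * (t * c) := by
      linear_combination hc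
    exact IsUnit.of_mul_eq_one (a := t) c (mul_left_cancel₀ (pow_ne_zero j ht0) this).symm
  · intro C h1 h2
    have hCle : C ≤ LinearMap.range φ := hrange ▸ h2.le
    have hmc : Submodule.map φ (Submodule.comap φ C) = C := by
      rw [Submodule.map_comap_eq, inf_eq_right.mpr hCle]
    have hle1 : Ideal.span {t} ≤ Submodule.comap φ C :=
      Submodule.map_le_iff_le_comap.mp (hmapt ▸ h1.le)
    have hne1 : Ideal.span {t} ≠ Submodule.comap φ C := fun e => h1.ne (by rw [← hmapt, e, hmc])
    have hne2 : Submodule.comap φ C ≠ ⊤ := fun e => h2.ne (by rw [← hmc, e, Submodule.map_top, hrange])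
    exact hne2 (ht.out.2 _ (lt_of_le_of_ne hle1 hne1))

lemma map_mkQ_covBy {I A B : Ideal R} (hA : I ≤ A) (h : A ⋖ B) :
    Submodule.map I.mkQ A ⋖ Submodule.map I.mkQ B := by
  have hcm : ∀ S : Ideal R, I ≤ S →
      Submodule.comap I.mkQ (Submodule.map I.mkQ S) = S := fun S hS => by
    rw [Submodule.comap_map_eq, Submodule.ker_mkQ, sup_eq_left.mpr hS]
  have hmc : ∀ T : Submodule R (R ⧸ I), Submodule.map I.mkQ (Submodule.comap I.mkQ T) = T :=
    fun T => by rw [Submodule.map_comap_eq, Submodule.range_mkQ, top_inf_eq]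
  have hB : I ≤ B := hA.trans h.1.le
  constructor
  · refine lt_of_le_of_ne (Submodule.map_mono h.1.le) fun e => h.1.ne ?_
    rw [← hcm A hA, e, hcm B hB]
  · intro C h1 h2
    have hlt1 : A < Submodule.comap I.mkQ C := by
      refine lt_of_le_of_ne ?_ fun e => h1.ne ?_
      · rw [← hcm A hA]; exact Submodule.comap_mono h1.le
      · rw [e, hmc]
    have hlt2 : Submodule.comap I.mkQ C < B := by
      refine lt_of_le_of_ne ?_ fun e => h2.ne ?_
      · rw [← hcm B hB]; exact Submodule.comap_mono h2.le
      · rw [← hmc C, e]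
    exact h.2 hlt1 hlt2

lemma exists_compositionSeries_quot_span_pow [IsDomain R] {t : R} (ht0 : t ≠ 0)
    (ht : (Ideal.span {t}).IsMaximal) (n : ℕ) :
    ∃ s : CompositionSeries (Submodule R (R ⧸ Ideal.span {t ^ n})),
      s.head = ⊥ ∧ s.last = ⊤ ∧ s.length = n := by
  set I : Ideal R := Ideal.span {t ^ n} with hI
  have hle : ∀ j : ℕ, j ≤ n → I ≤ Ideal.span {t ^ j} := fun j hj =>
    Ideal.span_singleton_le_span_singleton.mpr (pow_dvd_pow t hj)
  refine ⟨⟨n, fun i => Submodule.map I.mkQ (Ideal.span {t ^ (n - (i : ℕ))}), fun i => ?_⟩,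
    ?_, ?_, rfl⟩
  · show Submodule.map I.mkQ (Ideal.span {t ^ (n - ((i.castSucc : Fin (n+1)) : ℕ))}) ⋖
      Submodule.map I.mkQ (Ideal.span {t ^ (n - ((i.succ : Fin (n+1)) : ℕ))})
    have h1 : (n - ((i.castSucc : Fin (n+1)) : ℕ)) = (n - ((i : ℕ) + 1)) + 1 := by
      have := i.2; simp only [Fin.coe_castSucc]; omega
    have h2 : (n - ((i.succ : Fin (n+1)) : ℕ)) = n - ((i : ℕ) + 1) := by
      simp [Fin.val_succ]
    rw [h1, h2]
    exact map_mkQ_covBy (hle _ (by omega)) (span_pow_covBy ht0 ht _)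
  · show Submodule.map I.mkQ (Ideal.span {t ^ (n - ((0 : Fin (n+1)) : ℕ))}) = ⊥
    have : ((0 : Fin (n + 1)) : ℕ) = 0 := rfl
    rw [this, Nat.sub_zero, ← le_bot_iff, Submodule.map_le_iff_le_comap,
      Submodule.comap_bot, Submodule.ker_mkQ]
  · show Submodule.map I.mkQ (Ideal.span {t ^ (n - ((Fin.last n : Fin (n+1)) : ℕ))}) = ⊤
    rw [Fin.val_last, Nat.sub_self, pow_zero, Ideal.span_singleton_one,
      Submodule.map_top, Submodule.range_mkQ]

end Helpers



section LocHelpers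
variable {k : Type*} [Field k]

lemma X_notmem_span_X {i j : Fin 2} (h : i ≠ j) :
    (X i : MvPolynomial (Fin 2) k) ∉ Ideal.span {(X j : MvPolynomial (Fin 2) k)} := by
  rw [Ideal.mem_span_singleton]
  rintro ⟨g, hg⟩
  have := congrArg (eval (fun l : Fin 2 => if l = j then (0 : k) else 1)) hg
  simp [h] at this

lemma primeCompl_le_nzd (P : Ideal (MvPolynomial (Fin 2) k)) [P.IsPrime] :
    (P.primeCompl ≤ nonZeroDivisors (MvPolynomial (Fin 2) k)) := fun a ha =>
  mem_nonZeroDivisors_of_ne_zero fun h => ha (h ▸ P.zero_mem)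

end LocHelpers

set_option maxHeartbeats 1000000 in
/-- Let `q = p^m` and `E = {x^q y = z^p - z} ⊂ 𝔸³` over an algebraically
closed field `k` of characteristic `p`.  The divisor of the function `z` on `E` is
`X0 + q·Y0` where `X0 = V(y,z)` and `Y0 = V(x,z)`: the zero scheme of `z` on `E` is cut out
by the ideal `(z, x^q y)` (equivalently, by `x^q y` in `k[x,y]`), its reduced components
are `V(x)` and `V(y)`, and the lengths of the local rings of this zero scheme at the
generic points of `Y0` (resp. `X0`) — i.e. of the localizations of `k[x,y]/(x^q y)` at the
primes `(x)` (resp. `(y)`) — are `q` (resp. `1`), measured by composition series. -/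
theorem stmt18 {p : ℕ} [Fact p.Prime] {k : Type*} [Field k] [IsAlgClosed k] [CharP k p]
    (m : ℕ) (q : ℕ) (hq : q = p ^ m)
    [hPx : (Ideal.span {(X 0 : MvPolynomial (Fin 2) k)}).IsPrime]
    [hPy : (Ideal.span {(X 1 : MvPolynomial (Fin 2) k)}).IsPrime] :
    -- (a) on `E`, the zero scheme of `z` is cut out by `(z, x^q y)`
    (Ideal.span {(X 2 : MvPolynomial (Fin 3) k),
        X 0 ^ q * X 1 - X 2 ^ p + X 2} =
      Ideal.span {(X 2 : MvPolynomial (Fin 3) k), X 0 ^ q * X 1}) ∧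
    -- (b) the reduced components of the zero scheme are `X0 = V(y)` and `Y0 = V(x)`
    ((Ideal.span {(X 0 : MvPolynomial (Fin 2) k) ^ q * X 1}).radical =
      Ideal.span {(X 1 : MvPolynomial (Fin 2) k)} ⊓
        Ideal.span {(X 0 : MvPolynomial (Fin 2) k)}) ∧
    -- (c) the multiplicity along `Y0 = V(x,z)` is `q` ...
    (∃ s : CompositionSeries (Submodule
        (Localization.AtPrime (Ideal.span {(X 0 : MvPolynomial (Fin 2) k)}))
        ((Localization.AtPrime (Ideal.span {(X 0 : MvPolynomial (Fin 2) k)})) ⧸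
          (Ideal.map (algebraMap (MvPolynomial (Fin 2) k)
              (Localization.AtPrime (Ideal.span {(X 0 : MvPolynomial (Fin 2) k)})))
            (Ideal.span {(X 0 : MvPolynomial (Fin 2) k) ^ q * X 1})))),
      s.head = ⊥ ∧ s.last = ⊤ ∧ s.length = q) ∧
    -- ... and the multiplicity along `X0 = V(y,z)` is `1`
    (∃ s : CompositionSeries (Submodule
        (Localization.AtPrime (Ideal.span {(X 1 : MvPolynomial (Fin 2) k)}))
        ((Localization.AtPrime (Ideal.span {(X 1 : MvPolynomial (Fin 2) k)})) ⧸
          (Ideal.map (algebraMap (MvPolynomial (Fin 2) k)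
              (Localization.AtPrime (Ideal.span {(X 1 : MvPolynomial (Fin 2) k)})))
            (Ideal.span {(X 0 : MvPolynomial (Fin 2) k) ^ q * X 1})))),
      s.head = ⊥ ∧ s.last = ⊤ ∧ s.length = 1) := by
  have hp : p.Prime := Fact.out
  have hq1 : 1 ≤ q := hq ▸ Nat.one_le_pow m p hp.pos
  refine ⟨?_, ?_, ?_, ?_⟩
  · -- part (a)
    have hzp : (X 2 : MvPolynomial (Fin 3) k) ^ p = X 2 ^ (p - 1) * X 2 := by
      rw [← pow_succ, Nat.sub_add_cancel hp.one_le]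
    apply le_antisymm <;>
      rw [Ideal.span_le, Set.insert_subset_iff, Set.singleton_subset_iff] <;>
      refine ⟨Ideal.subset_span (Set.mem_insert _ _), ?_⟩
    · rw [SetLike.mem_coe, Ideal.mem_span_pair]
      exact ⟨1 - X 2 ^ (p - 1), 1, by linear_combination hzp⟩
    · rw [SetLike.mem_coe, Ideal.mem_span_pair]
      exact ⟨X 2 ^ (p - 1) - 1, 1, by linear_combination -hzp⟩
  · -- part (b)
    refine le_antisymm (le_inf ?_ ?_) ?_
    · calc (Ideal.span {(X 0 : MvPolynomial (Fin 2) k) ^ q * X 1}).radical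
          ≤ (Ideal.span {(X 1 : MvPolynomial (Fin 2) k)}).radical :=
            Ideal.radical_mono (Ideal.span_singleton_le_span_singleton.mpr
              (dvd_mul_left _ _))
        _ = _ := hPy.radical
    · calc (Ideal.span {(X 0 : MvPolynomial (Fin 2) k) ^ q * X 1}).radical
          ≤ (Ideal.span {(X 0 : MvPolynomial (Fin 2) k)}).radical :=
            Ideal.radical_mono (Ideal.span_singleton_le_span_singleton.mpr
              (dvd_mul_of_dvd_left (dvd_pow_self _ (by omega)) _))
        _ = _ := hPx.radical
    · intro f hf
      obtain ⟨hf1, hf0⟩ := Ideal.mem_inf.mp hf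
      obtain ⟨a, ha⟩ := Ideal.mem_span_singleton.mp hf1
      obtain ⟨b, hb⟩ := Ideal.mem_span_singleton.mp hf0
      refine Ideal.mem_radical_iff.mpr ⟨q + 1, Ideal.mem_span_singleton.mpr
        ⟨b ^ q * a, ?_⟩⟩
      have : f ^ (q + 1) = (X 0 * b) ^ q * (X 1 * a) := by
        rw [← hb, ← ha, ← pow_succ]
      rw [this]; ring
  · -- part (c)
    set R := MvPolynomial (Fin 2) k
    set P : Ideal R := Ideal.span {(X 0 : R)} with hP
    set L := Localization.AtPrime P with hL
    have hMle := primeCompl_le_nzd P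
    haveI : IsDomain L := IsLocalization.isDomain_localization hMle
    have hinj : Function.Injective (algebraMap R L) := IsLocalization.injective L hMle
    set t : L := algebraMap R L (X 0) with hT
    have ht0 : t ≠ 0 := fun h => X_ne_zero 0 (hinj (by rw [map_zero]; exact h))
    have hspan : Ideal.span {t} = Ideal.map (algebraMap R L) P := by
      show Ideal.span {t} = Ideal.map (algebraMap R L) (Ideal.span {(X 0 : R)})
      rw [Ideal.map_span, Set.image_singleton]
    have htmax : (Ideal.span {t}).IsMaximal := by
      rw [hspan, Localization.AtPrime.map_eq_maximalIdeal]
      exact IsLocalRing.maximalIdeal.isMaximal _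
    have hX1 : (X 1 : R) ∈ P.primeCompl := fun h =>
      X_notmem_span_X (k := k) (i := 1) (j := 0) (by decide) (hP ▸ h)
    have hu : IsUnit (algebraMap R L (X 1)) :=
      IsLocalization.map_units (M := P.primeCompl) L ⟨X 1, hX1⟩
    have hmap : Ideal.map (algebraMap R L) (Ideal.span {(X 0 : R) ^ q * X 1}) =
        Ideal.span {t ^ q} := by
      rw [Ideal.map_span, Set.image_singleton, map_mul, map_pow,
        Ideal.span_singleton_mul_right_unit hu]
    rw [hmap]
    exact exists_compositionSeries_quot_span_pow ht0 htmax q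
  · -- part (d)
    set R := MvPolynomial (Fin 2) k
    set P : Ideal R := Ideal.span {(X 1 : R)} with hP
    set L := Localization.AtPrime P with hL
    have hMle := primeCompl_le_nzd P
    haveI : IsDomain L := IsLocalization.isDomain_localization hMle
    have hinj : Function.Injective (algebraMap R L) := IsLocalization.injective L hMle
    set t : L := algebraMap R L (X 1) with hT
    have ht0 : t ≠ 0 := fun h => X_ne_zero 1 (hinj (by rw [map_zero]; exact h))
    have hspan : Ideal.span {t} = Ideal.map (algebraMap R L) P := by
      show Ideal.span {t} = Ideal.map (algebraMap R L) (Ideal.span {(X 1 : R)})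
      rw [Ideal.map_span, Set.image_singleton]
    have htmax : (Ideal.span {t}).IsMaximal := by
      rw [hspan, Localization.AtPrime.map_eq_maximalIdeal]
      exact IsLocalRing.maximalIdeal.isMaximal _
    have hX0 : (X 0 : R) ∈ P.primeCompl := fun h =>
      X_notmem_span_X (k := k) (i := 0) (j := 1) (by decide) (hP ▸ h)
    have hu : IsUnit (algebraMap R L (X 0)) :=
      IsLocalization.map_units (M := P.primeCompl) L ⟨X 0, hX0⟩
    have hmap : Ideal.map (algebraMap R L) (Ideal.span {(X 0 : R) ^ q * X 1}) =
        Ideal.span {t ^ 1} := by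
      rw [Ideal.map_span, Set.image_singleton, map_mul, map_pow,
        Ideal.span_singleton_mul_left_unit (hu.pow q), pow_one]
    rw [hmap]
    exact exists_compositionSeries_quot_span_pow ht0 htmax 1
end
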